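/- Let Γ = (G,F) be a convenient framed directed graph and let (G_Γ, ∼_Γ, R_Γ) be the associated framed turbulence chart (forget orientations; ∼ separates incoming from outgoing half-edges at each internal vertex; incoming orders are preserved and outgoing orders reversed). Then two routes p, q of Γ are compatible in the framed-DAG sense if and only if their images are compatible in the framed turbulence chart sense; consequently cliques of Γ correspond bijectively to cliques of (G_Γ, ∼_Γ, R_Γ). -/

import Mathlib

open Finset

/-- A turbulence chart: a finite undirected graph given by half-edges `H` with a
fixed-point-free involution `op` pairing half-edges into edges, a vertex map `vert`,
and at each internal vertex a partition of its half-edges into two nonempty classes,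
encoded by `side : H → Bool`. -/
structure TurbChart where
  V : Type
  H : Type
  [fintV : Fintype V]
  [decV : DecidableEq V]
  [fintH : Fintype H]
  [decH : DecidableEq H]
  vert : H → V
  op : H → H
  side : H → Bool
  op_op : ∀ h, op (op h) = h
  op_ne : ∀ h, op h ≠ h
  vert_cover : ∀ v, ∃ h, vert h = v
  sides_nonempty : ∀ v,
    2 ≤ (Finset.univ.filter fun h => vert h = v).card →
    ∀ b : Bool, ∃ h, vert h = v ∧ side h = b

attribute [instance] TurbChart.fintV TurbChart.decV TurbChart.fintH TurbChart.decH

namespace TurbChart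

variable (T : TurbChart)

def degree (v : T.V) : ℕ := (Finset.univ.filter fun h => T.vert h = v).card

def Fringe (v : T.V) : Prop := T.degree v = 1

def Internal (v : T.V) : Prop := 2 ≤ T.degree v

instance : DecidablePred T.Fringe := fun v =>
  decidable_of_iff (T.degree v = 1) Iff.rfl

instance : DecidablePred T.Internal := fun v =>
  decidable_of_iff (2 ≤ T.degree v) Iff.rfl

/-- A flow on a turbulence chart: a labelling of edges (encoded as an `op`-invariant
function on half-edges) conserving flow across the two classes at each internal vertex. -/
def IsFlow (F : T.H → ℝ) : Prop :=
  (∀ h, F (T.op h) = F h) ∧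
  ∀ v, T.Internal v →
    ∑ h ∈ Finset.univ.filter (fun h => T.vert h = v ∧ T.side h = true), F h =
    ∑ h ∈ Finset.univ.filter (fun h => T.vert h = v ∧ T.side h = false), F h

/-- The strength of a flow: half the sum of its values over fringe incidences. -/
noncomputable def strength (F : T.H → ℝ) : ℝ :=
  (1 / 2) * ∑ h ∈ Finset.univ.filter (fun h => T.Fringe (T.vert h)), F h

/-- The turbulence polyhedron `F₁(G,∼)`: nonnegative flows of strength 1. -/
def unitFlows : Set (T.H → ℝ) :=
  {F | T.IsFlow F ∧ (∀ h, 0 ≤ F h) ∧ T.strength F = 1}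

/-- A string: a walk along oriented edges (an oriented edge is encoded by its tail
half-edge `a`, its head half-edge being `op a`) which crosses the class partition at
each internal vertex it passes through. -/
def IsString (l : List T.H) : Prop :=
  List.Chain' (fun a b => T.vert (T.op a) = T.vert b ∧ T.side (T.op a) ≠ T.side b) l

/-- A route: a nonempty string starting and ending at fringe vertices. -/
def IsRoute (l : List T.H) : Prop :=
  T.IsString l ∧ l ≠ [] ∧
  (∀ h ∈ l.head?, T.Fringe (T.vert h)) ∧
  (∀ h ∈ l.getLast?, T.Fringe (T.vert (T.op h)))

/-- A band: a nonempty cyclically composable string which is not a proper power. -/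
def IsBand (l : List T.H) : Prop :=
  l ≠ [] ∧ T.IsString (l ++ l) ∧
  ¬ ∃ (c : List T.H) (k : ℕ), 2 ≤ k ∧ l = (List.replicate k c).flatten

def Acyclic : Prop := ¬ ∃ l, T.IsBand l

/-- The indicator vector of a walk: multiplicity of each edge (in either orientation). -/
noncomputable def indic (l : List T.H) : T.H → ℝ :=
  fun h => ((l.count h + l.count (T.op h) : ℕ) : ℝ)

/-- The inverse of a string. -/
def inv (l : List T.H) : List T.H := (l.map T.op).reverse

end TurbChart

/-- A framing on a turbulence chart: a linear order on each class of half-edges. -/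
structure Framing (T : TurbChart) where
  lt : T.H → T.H → Prop
  lt_irrefl : ∀ h, ¬ lt h h
  lt_trans : ∀ a b c, lt a b → lt b c → lt a c
  lt_compat : ∀ a b, lt a b → T.vert a = T.vert b ∧ T.side a = T.side b
  lt_total : ∀ a b, a ≠ b → T.vert a = T.vert b → T.side a = T.side b →
    lt a b ∨ lt b a

namespace TurbChart

variable (T : TurbChart)

/-- Substrings of a trail (a route, or a band where substrings of any power are allowed),
up to inverses. -/
def Substr (t : List T.H) (isBand : Bool) (s : List T.H) : Prop :=
  if isBand then
    ∃ k : ℕ, s <:+: (List.replicate k t).flatten ∨ s <:+: T.inv (List.replicate k t).flatten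
  else s <:+: t ∨ s <:+: T.inv t

/-- `p` contains the "low" member of an incompatibility whose "high" member lies in `q`. -/
def IsIncompatPair (R : Framing T) (p q : List T.H × Bool) : Prop :=
  ∃ (e₁ e₂ f₁ f₂ : T.H) (s : List T.H),
    R.lt (T.op e₁) (T.op e₂) ∧ R.lt f₁ f₂ ∧
    T.IsString (e₁ :: (s ++ [f₁])) ∧ T.IsString (e₂ :: (s ++ [f₂])) ∧
    T.Substr p.1 p.2 (e₁ :: (s ++ [f₁])) ∧ T.Substr q.1 q.2 (e₂ :: (s ++ [f₂]))

def Compatible (R : Framing T) (p q : List T.H × Bool) : Prop :=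
  ¬ (T.IsIncompatPair R p q ∨ T.IsIncompatPair R q p)

/-- A trail: a route (`Bool` component `false`) or a band (`true`). -/
def IsTrail (t : List T.H × Bool) : Prop :=
  if t.2 then T.IsBand t.1 else T.IsRoute t.1

noncomputable def indicT (t : List T.H × Bool) : T.H → ℝ := T.indic t.1

def RouteEquiv (l₁ l₂ : List T.H) : Prop := l₂ = l₁ ∨ l₂ = T.inv l₁

def BandEquiv (l₁ l₂ : List T.H) : Prop :=
  ∃ x y, l₁ = x ++ y ∧ (l₂ = y ++ x ∨ l₂ = T.inv (y ++ x))

def TrailEquiv (t₁ t₂ : List T.H × Bool) : Prop :=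
  t₁.2 = t₂.2 ∧ (if t₁.2 then T.BandEquiv t₁.1 t₂.1 else T.RouteEquiv t₁.1 t₂.1)

/-- A bundle: a set of pairwise compatible (hence self-compatible) trails, taken with
distinct representatives up to equivalence of trails. -/
def IsBundle (R : Framing T) (S : Finset (List T.H × Bool)) : Prop :=
  (∀ t ∈ S, T.IsTrail t) ∧
  (∀ t₁ ∈ S, ∀ t₂ ∈ S, T.Compatible R t₁ t₂) ∧
  (∀ t₁ ∈ S, ∀ t₂ ∈ S, T.TrailEquiv t₁ t₂ → t₁ = t₂)

/-- The bundle simplihedron `Δ₁(K̄)`: unit bundle combinations of the bundle. -/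
def unitBundleSimplihedron (S : Finset (List T.H × Bool)) : Set (T.H → ℝ) :=
  {F | ∃ a : List T.H × Bool → ℝ,
    (∀ t ∈ S, 0 ≤ a t) ∧
    F = ∑ t ∈ S, a t • T.indicT t ∧
    ∑ t ∈ S.filter (fun t => t.2 = false), a t = 1}

/-- Every nonnegative flow has at most one representation as a positive bundle
combination (up to equivalence of trails). -/
def UniquePositiveCombos (R : Framing T) : Prop :=
  ∀ (S₁ S₂ : Finset (List T.H × Bool)) (a₁ a₂ : List T.H × Bool → ℝ),
    T.IsBundle R S₁ → T.IsBundle R S₂ →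
    (∀ t ∈ S₁, 0 < a₁ t) → (∀ t ∈ S₂, 0 < a₂ t) →
    (∑ t ∈ S₁, a₁ t • T.indicT t) = (∑ t ∈ S₂, a₂ t • T.indicT t) →
    (∀ t₁ ∈ S₁, ∃ t₂ ∈ S₂, T.TrailEquiv t₁ t₂ ∧ a₁ t₁ = a₂ t₂) ∧
    (∀ t₂ ∈ S₂, ∃ t₁ ∈ S₁, T.TrailEquiv t₁ t₂ ∧ a₁ t₁ = a₂ t₂)

end TurbChart

/-- A finite directed graph. -/
structure DiGraph where
  V : Type
  E : Type
  [fintV : Fintype V]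
  [decV : DecidableEq V]
  [fintE : Fintype E]
  [decE : DecidableEq E]
  src : E → V
  tgt : E → V

attribute [instance] DiGraph.fintV DiGraph.decV DiGraph.fintE DiGraph.decE

namespace DiGraph

variable (G : DiGraph)

/-- A source vertex: no incoming edges. -/
def IsSource (v : G.V) : Prop := ∀ e, G.tgt e ≠ v

/-- A sink vertex: no outgoing edges. -/
def IsSink (v : G.V) : Prop := ∀ e, G.src e ≠ v

def InternalV (v : G.V) : Prop := ¬ G.IsSource v ∧ ¬ G.IsSink v

instance : DecidablePred G.IsSource := fun v =>
  decidable_of_iff (∀ e, G.tgt e ≠ v) Iff.rfl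

instance : DecidablePred G.IsSink := fun v =>
  decidable_of_iff (∀ e, G.src e ≠ v) Iff.rfl

/-- Convenient: every source and every sink vertex is incident to exactly one edge. -/
def Convenient : Prop :=
  (∀ v, G.IsSource v → (Finset.univ.filter fun e => G.src e = v).card = 1) ∧
  (∀ v, G.IsSink v → (Finset.univ.filter fun e => G.tgt e = v).card = 1)

/-- The unit flow polyhedron of a directed graph: nonnegative flows conserving flow at
internal vertices whose total outflow from sources is 1. -/
def unitFlowsD : Set (G.E → ℝ) :=
  {F | (∀ e, 0 ≤ F e) ∧
    (∀ v, G.InternalV v →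
      ∑ e ∈ Finset.univ.filter (fun e => G.tgt e = v), F e =
      ∑ e ∈ Finset.univ.filter (fun e => G.src e = v), F e) ∧
    ∑ e ∈ Finset.univ.filter (fun e => G.IsSource (G.src e)), F e = 1}

end DiGraph

/-- A framing on a directed graph: linear orders on the incoming and on the outgoing
edges at each vertex. -/
structure DFraming (G : DiGraph) where
  ltIn : G.E → G.E → Prop
  ltOut : G.E → G.E → Prop
  in_compat : ∀ a b, ltIn a b → G.tgt a = G.tgt b
  out_compat : ∀ a b, ltOut a b → G.src a = G.src b
  in_irrefl : ∀ a, ¬ ltIn a a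
  out_irrefl : ∀ a, ¬ ltOut a a
  in_trans : ∀ a b c, ltIn a b → ltIn b c → ltIn a c
  out_trans : ∀ a b c, ltOut a b → ltOut b c → ltOut a c
  in_total : ∀ a b, a ≠ b → G.tgt a = G.tgt b → ltIn a b ∨ ltIn b a
  out_total : ∀ a b, a ≠ b → G.src a = G.src b → ltOut a b ∨ ltOut b a

namespace DiGraph

variable (G : DiGraph)

/-- A directed path (consecutive edges compose). -/
def IsPath (l : List G.E) : Prop :=
  List.Chain' (fun a b => G.tgt a = G.src b) l

/-- A route of a directed graph: a maximal directed path, i.e. one from a source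
vertex to a sink vertex. -/
def IsRouteD (l : List G.E) : Prop :=
  G.IsPath l ∧ l ≠ [] ∧
  (∀ e ∈ l.head?, G.IsSource (G.src e)) ∧
  (∀ e ∈ l.getLast?, G.IsSink (G.tgt e))

/-- Incompatibility of routes of a framed directed graph: subpaths `e₁ s f₂` and
`e₂ s f₁` with `e₁ <_in e₂` and `f₁ <_out f₂`. -/
def IncompatD (DF : DFraming G) (p q : List G.E) : Prop :=
  ∃ (e₁ e₂ f₁ f₂ : G.E) (s : List G.E),
    DF.ltIn e₁ e₂ ∧ DF.ltOut f₁ f₂ ∧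
    G.IsPath (e₁ :: (s ++ [f₂])) ∧ G.IsPath (e₂ :: (s ++ [f₁])) ∧
    (((e₁ :: (s ++ [f₂])) <:+: p ∧ (e₂ :: (s ++ [f₁])) <:+: q) ∨
     ((e₁ :: (s ++ [f₂])) <:+: q ∧ (e₂ :: (s ++ [f₁])) <:+: p))

def CompatD (DF : DFraming G) (p q : List G.E) : Prop := ¬ G.IncompatD DF p q

end DiGraph

section KeyAux

variable {G : DiGraph} {DF : DFraming G} {T : TurbChart} {R : Framing T}

lemma key_incompat_iff
    (eH : T.H ≃ G.E × Bool) (fV : T.V ≃ G.V)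
    (hvert : ∀ a : G.E, fV (T.vert (eH.symm (a, false))) = G.src a ∧
      fV (T.vert (eH.symm (a, true))) = G.tgt a)
    (hop : ∀ (a : G.E) (b : Bool), T.op (eH.symm (a, b)) = eH.symm (a, !b))
    (hside : ∀ (a : G.E) (b : Bool), T.side (eH.symm (a, b)) = b)
    (hltIn : ∀ a b : G.E,
      R.lt (eH.symm (a, true)) (eH.symm (b, true)) ↔ DF.ltIn a b)
    (hltOut : ∀ a b : G.E,
      R.lt (eH.symm (a, false)) (eH.symm (b, false)) ↔ DF.ltOut b a)
    (p q : List G.E) :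
    T.IsIncompatPair R (p.map (fun a => eH.symm (a, false)), false)
        (q.map (fun a => eH.symm (a, false)), false) ↔
      ∃ (e₁ e₂ f₁ f₂ : G.E) (s : List G.E),
        DF.ltIn e₁ e₂ ∧ DF.ltOut f₁ f₂ ∧
        G.IsPath (e₁ :: (s ++ [f₂])) ∧ G.IsPath (e₂ :: (s ++ [f₁])) ∧
        (e₁ :: (s ++ [f₂])) <:+: p ∧ (e₂ :: (s ++ [f₁])) <:+: q := by
  -- basic facts
  have hEq : ∀ h : T.H, eH.symm (eH h) = h := eH.symm_apply_apply
  have hside' : ∀ h : T.H, T.side h = (eH h).2 := by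
    intro h
    have := hside (eH h).1 (eH h).2
    rwa [Prod.mk.eta, hEq] at this
  have hop' : ∀ h : T.H, T.op h = eH.symm ((eH h).1, !(eH h).2) := by
    intro h
    have := hop (eH h).1 (eH h).2
    rwa [Prod.mk.eta, hEq] at this
  have hsideop : ∀ h : T.H, T.side (T.op h) = !(eH h).2 := by
    intro h; rw [hop', hside]
  -- string lemmas
  have hstrF : ∀ l : List G.E,
      T.IsString (l.map (fun a => eH.symm (a, false))) ↔ G.IsPath l := by
    intro l
    unfold TurbChart.IsString DiGraph.IsPath List.Chain'
    rw [List.isChain_map]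
    have hpt : ∀ x y : G.E,
        (T.vert (T.op (eH.symm (x, false))) = T.vert (eH.symm (y, false)) ∧
          T.side (T.op (eH.symm (x, false))) ≠ T.side (eH.symm (y, false))) ↔
        G.tgt x = G.src y := by
      intro x y
      rw [hop x false]
      simp only [Bool.not_false, hside]
      constructor
      · rintro ⟨h1, _⟩
        have := congrArg fV h1
        rwa [(hvert x).2, (hvert y).1] at this
      · intro h
        refine ⟨fV.injective ?_, by simp⟩
        rw [(hvert x).2, (hvert y).1]; exact h
    exact ⟨fun h => h.imp fun a b hab => (hpt a b).1 hab,
      fun h => h.imp fun a b hab => (hpt a b).2 hab⟩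
  have hstrT : ∀ l : List G.E,
      T.IsString (l.map (fun a => eH.symm (a, true))) ↔ G.IsPath l.reverse := by
    intro l
    unfold TurbChart.IsString DiGraph.IsPath List.Chain'
    rw [List.isChain_map, List.isChain_reverse]
    have hpt : ∀ x y : G.E,
        (T.vert (T.op (eH.symm (x, true))) = T.vert (eH.symm (y, true)) ∧
          T.side (T.op (eH.symm (x, true))) ≠ T.side (eH.symm (y, true))) ↔
        G.tgt y = G.src x := by
      intro x y
      rw [hop x true]
      simp only [Bool.not_true, hside]
      constructor
      · rintro ⟨h1, _⟩
        have := congrArg fV h1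
        rw [(hvert x).1, (hvert y).2] at this
        exact this.symm
      · intro h
        refine ⟨fV.injective ?_, by simp⟩
        rw [(hvert x).1, (hvert y).2]; exact h.symm
    exact ⟨fun h => h.imp fun a b hab => (hpt a b).1 hab,
      fun h => h.imp fun a b hab => (hpt a b).2 hab⟩
  -- inverse of mapped route
  have hinv : ∀ l : List G.E,
      T.inv (l.map (fun a => eH.symm (a, false))) =
        l.reverse.map (fun a => eH.symm (a, true)) := by
    intro l
    unfold TurbChart.inv
    rw [List.map_map]
    have hc : (T.op ∘ fun a => eH.symm (a, false)) =
        fun a : G.E => eH.symm (a, true) := by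
      funext a
      simp only [Function.comp_apply, hop a false, Bool.not_false]
    rw [hc, ← List.map_reverse]
  -- membership bit extraction
  have hmem : ∀ (b : Bool) (l : List G.E) (h : T.H),
      h ∈ l.map (fun a => eH.symm (a, b)) →
        (eH h).2 = b ∧ h = eH.symm ((eH h).1, b) := by
    intro b l h hmem'
    obtain ⟨a, _, ha⟩ := List.mem_map.1 hmem'
    have : eH h = (a, b) := by rw [← ha]; simp
    constructor
    · rw [this]
    · rw [this]; rw [← ha]
  -- recovery of underlying edge lists from infixes
  have hrecover : ∀ (b : Bool) (P : List G.E) (e f : T.H) (s : List T.H),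
      e :: (s ++ [f]) <:+: P.map (fun a => eH.symm (a, b)) →
      ∃ (x y : G.E) (σ : List G.E),
        (x :: (σ ++ [y])) <:+: P ∧
        e = eH.symm (x, b) ∧ f = eH.symm (y, b) ∧
        s = σ.map (fun a => eH.symm (a, b)) := by
    intro b P e f s hinf
    have hsub := hinf.subset
    have hee : e = eH.symm ((eH e).1, b) :=
      (hmem b P e (hsub (List.mem_cons_self))).2
    have hff : f = eH.symm ((eH f).1, b) :=
      (hmem b P f (hsub (by simp))).2
    have hss : ∀ x ∈ s, x = eH.symm ((eH x).1, b) := by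
      intro x hx
      exact (hmem b P x (hsub (by simp [hx]))).2
    refine ⟨(eH e).1, (eH f).1, s.map (fun h => (eH h).1), ?_, hee, hff, ?_⟩
    · have hmapped := hinf.map (fun h => (eH h).1)
      have h1 : ((e :: (s ++ [f])).map (fun h => (eH h).1)) =
          (eH e).1 :: (s.map (fun h => (eH h).1) ++ [(eH f).1]) := by simp
      have h2 : ((P.map (fun a => eH.symm (a, b))).map (fun h => (eH h).1)) = P := by
        rw [List.map_map]
        have : ((fun h : T.H => (eH h).1) ∘ fun a : G.E => eH.symm (a, b)) = id := by
          funext a; simp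
        rw [this, List.map_id]
      rwa [h1, h2] at hmapped
    · rw [List.map_map]
      conv_lhs => rw [show s = s.map id from (List.map_id s).symm]
      exact List.map_congr_left fun x hx => by
        simpa using hss x hx
  have hmapinj : ∀ (b : Bool) (σ τ : List G.E),
      σ.map (fun a => eH.symm (a, b)) = τ.map (fun a => eH.symm (a, b)) → σ = τ := by
    intro b σ τ h
    have := congrArg (List.map (fun h : T.H => (eH h).1)) h
    rw [List.map_map, List.map_map] at this
    simpa [Function.comp_def] using this
  constructor
  · rintro ⟨ee1, ee2, ff1, ff2, st, h1, h2, h3, h4, h5, h6⟩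
    simp only [TurbChart.Substr, Bool.false_eq_true, if_false] at h5 h6
    -- parity of the two strings must agree
    have hpar : (eH ee1).2 = (eH ee2).2 := by
      have := (R.lt_compat _ _ h1).2
      rw [hsideop, hsideop] at this
      exact Bool.not_inj this
    rcases h5 with h5 | h5 <;> rcases h6 with h6 | h6
    · -- both forward
      obtain ⟨x₁, y₁, σ₁, hinf₁, he₁, hf₁, hs₁⟩ := hrecover false p ee1 ff1 st h5
      obtain ⟨x₂, y₂, σ₂, hinf₂, he₂, hf₂, hs₂⟩ := hrecover false q ee2 ff2 st h6
      have hσ : σ₂ = σ₁ := hmapinj false σ₂ σ₁ (by rw [← hs₂]; exact hs₁)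
      rw [hσ] at hinf₂ hs₂
      refine ⟨x₁, x₂, y₂, y₁, σ₁, ?_, ?_, ?_, ?_, hinf₁, hinf₂⟩
      · rw [he₁, he₂, hop, hop] at h1
        simpa only [Bool.not_false] using (hltIn x₁ x₂).1 h1
      · rw [hf₁, hf₂] at h2
        exact (hltOut y₁ y₂).1 h2
      · rw [he₁, hf₁, hs₁] at h3
        have : (eH.symm (x₁, false) :: (σ₁.map (fun a => eH.symm (a, false)) ++
            [eH.symm (y₁, false)])) =
            (x₁ :: (σ₁ ++ [y₁])).map (fun a => eH.symm (a, false)) := by simp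
        rw [this] at h3
        exact (hstrF _).1 h3
      · rw [he₂, hf₂, hs₂] at h4
        have : (eH.symm (x₂, false) :: (σ₁.map (fun a => eH.symm (a, false)) ++
            [eH.symm (y₂, false)])) =
            (x₂ :: (σ₁ ++ [y₂])).map (fun a => eH.symm (a, false)) := by simp
        rw [this] at h4
        exact (hstrF _).1 h4
    · -- mixed: contradiction
      exfalso
      rw [hinv] at h6
      have hb₁ : (eH ee1).2 = false :=
        (hmem false p ee1 (h5.subset (List.mem_cons_self))).1
      have hb₂ : (eH ee2).2 = true :=
        (hmem true q.reverse ee2 (h6.subset (List.mem_cons_self))).1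
      rw [hb₁, hb₂] at hpar
      exact Bool.noConfusion hpar
    · -- mixed: contradiction
      exfalso
      rw [hinv] at h5
      have hb₁ : (eH ee1).2 = true :=
        (hmem true p.reverse ee1 (h5.subset (List.mem_cons_self))).1
      have hb₂ : (eH ee2).2 = false :=
        (hmem false q ee2 (h6.subset (List.mem_cons_self))).1
      rw [hb₁, hb₂] at hpar
      exact Bool.noConfusion hpar
    · -- both inverse
      rw [hinv] at h5 h6
      obtain ⟨x₁, y₁, σ₁, hinf₁, he₁, hf₁, hs₁⟩ := hrecover true p.reverse ee1 ff1 st h5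
      obtain ⟨x₂, y₂, σ₂, hinf₂, he₂, hf₂, hs₂⟩ := hrecover true q.reverse ee2 ff2 st h6
      have hσ : σ₂ = σ₁ := hmapinj true σ₂ σ₁ (by rw [← hs₂]; exact hs₁)
      rw [hσ] at hinf₂ hs₂
      have hrev : ∀ (x y : G.E) (σ : List G.E),
          (x :: (σ ++ [y])).reverse = y :: (σ.reverse ++ [x]) := by
        intro x y σ; simp
      have hinf₁' : (y₁ :: (σ₁.reverse ++ [x₁])) <:+: p := by
        have h := List.reverse_infix.mpr hinf₁
        rw [List.reverse_reverse, hrev] at h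
        exact h
      have hinf₂' : (y₂ :: (σ₁.reverse ++ [x₂])) <:+: q := by
        have h := List.reverse_infix.mpr hinf₂
        rw [List.reverse_reverse, hrev] at h
        exact h
      refine ⟨y₁, y₂, x₂, x₁, σ₁.reverse, ?_, ?_, ?_, ?_, hinf₁', hinf₂'⟩
      · rw [hf₁, hf₂] at h2
        exact (hltIn y₁ y₂).1 h2
      · rw [he₁, he₂, hop, hop] at h1
        simp only [Bool.not_true] at h1
        exact (hltOut x₁ x₂).1 h1
      · rw [he₁, hf₁, hs₁] at h3
        have : (eH.symm (x₁, true) :: (σ₁.map (fun a => eH.symm (a, true)) ++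
            [eH.symm (y₁, true)])) =
            (x₁ :: (σ₁ ++ [y₁])).map (fun a => eH.symm (a, true)) := by simp
        rw [this] at h3
        have := (hstrT _).1 h3
        rwa [hrev] at this
      · rw [he₂, hf₂, hs₂] at h4
        have : (eH.symm (x₂, true) :: (σ₁.map (fun a => eH.symm (a, true)) ++
            [eH.symm (y₂, true)])) =
            (x₂ :: (σ₁ ++ [y₂])).map (fun a => eH.symm (a, true)) := by simp
        rw [this] at h4
        have := (hstrT _).1 h4
        rwa [hrev] at this
  · rintro ⟨e₁, e₂, f₁, f₂, s, hIn, hOut, hp₁, hp₂, hi₁, hi₂⟩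
    refine ⟨eH.symm (e₁, false), eH.symm (e₂, false), eH.symm (f₂, false),
      eH.symm (f₁, false), s.map (fun a => eH.symm (a, false)), ?_, ?_, ?_, ?_, ?_, ?_⟩
    · rw [hop, hop]
      simpa only [Bool.not_false] using (hltIn e₁ e₂).2 hIn
    · exact (hltOut f₂ f₁).2 hOut
    · have : (eH.symm (e₁, false) :: (s.map (fun a => eH.symm (a, false)) ++
          [eH.symm (f₂, false)])) =
          (e₁ :: (s ++ [f₂])).map (fun a => eH.symm (a, false)) := by simp
      rw [this]
      exact (hstrF _).2 hp₁
    · have : (eH.symm (e₂, false) :: (s.map (fun a => eH.symm (a, false)) ++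
          [eH.symm (f₁, false)])) =
          (e₂ :: (s ++ [f₁])).map (fun a => eH.symm (a, false)) := by simp
      rw [this]
      exact (hstrF _).2 hp₂
    · simp only [TurbChart.Substr, Bool.false_eq_true, if_false]
      left
      have : (eH.symm (e₁, false) :: (s.map (fun a => eH.symm (a, false)) ++
          [eH.symm (f₂, false)])) =
          (e₁ :: (s ++ [f₂])).map (fun a => eH.symm (a, false)) := by simp
      rw [this]
      exact hi₁.map _
    · simp only [TurbChart.Substr, Bool.false_eq_true, if_false]
      left
      have : (eH.symm (e₂, false) :: (s.map (fun a => eH.symm (a, false)) ++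
          [eH.symm (f₁, false)])) =
          (e₂ :: (s ++ [f₁])).map (fun a => eH.symm (a, false)) := by simp
      rw [this]
      exact hi₂.map _

end KeyAux

/-- For a convenient framed directed graph `Γ = (G, DF)` and its
associated framed turbulence chart `(T, R)` (forget orientations, separate incoming
from outgoing half-edges, preserve incoming orders and reverse outgoing orders), two
routes of `Γ` are compatible in the framed-DAG sense iff their images are compatible
in the framed-turbulence-chart sense; consequently cliques correspond. -/
theorem framed_digraph_compatibility_corresponds
    (G : DiGraph) (DF : DFraming G) (T : TurbChart) (R : Framing T)
    (hconv : G.Convenient)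
    (eH : T.H ≃ G.E × Bool) (fV : T.V ≃ G.V)
    (hvert : ∀ a : G.E, fV (T.vert (eH.symm (a, false))) = G.src a ∧
      fV (T.vert (eH.symm (a, true))) = G.tgt a)
    (hop : ∀ (a : G.E) (b : Bool), T.op (eH.symm (a, b)) = eH.symm (a, !b))
    (hside : ∀ (a : G.E) (b : Bool), T.side (eH.symm (a, b)) = b)
    (hltIn : ∀ a b : G.E,
      R.lt (eH.symm (a, true)) (eH.symm (b, true)) ↔ DF.ltIn a b)
    (hltOut : ∀ a b : G.E,
      R.lt (eH.symm (a, false)) (eH.symm (b, false)) ↔ DF.ltOut b a) :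
    (∀ p q : List G.E, G.IsRouteD p → G.IsRouteD q →
      (G.CompatD DF p q ↔
        T.Compatible R (p.map (fun a => eH.symm (a, false)), false)
          (q.map (fun a => eH.symm (a, false)), false))) ∧
    (∀ S : Finset (List G.E), (∀ p ∈ S, G.IsRouteD p) →
      ((∀ p ∈ S, ∀ q ∈ S, G.CompatD DF p q) ↔
        (∀ p ∈ S, ∀ q ∈ S,
          T.Compatible R (p.map (fun a => eH.symm (a, false)), false)
            (q.map (fun a => eH.symm (a, false)), false)))) := by
  have key : ∀ p q : List G.E, G.IncompatD DF p q ↔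
      (T.IsIncompatPair R (p.map (fun a => eH.symm (a, false)), false)
          (q.map (fun a => eH.symm (a, false)), false) ∨
        T.IsIncompatPair R (q.map (fun a => eH.symm (a, false)), false)
          (p.map (fun a => eH.symm (a, false)), false)) := by
    intro p q
    constructor
    · rintro ⟨e₁, e₂, f₁, f₂, s, h1, h2, h3, h4, h5 | h5⟩
      · exact Or.inl ((key_incompat_iff eH fV hvert hop hside hltIn hltOut p q).2
          ⟨e₁, e₂, f₁, f₂, s, h1, h2, h3, h4, h5.1, h5.2⟩)
      · exact Or.inr ((key_incompat_iff eH fV hvert hop hside hltIn hltOut q p).2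
          ⟨e₁, e₂, f₁, f₂, s, h1, h2, h3, h4, h5.1, h5.2⟩)
    · rintro (h | h)
      · obtain ⟨e₁, e₂, f₁, f₂, s, h1, h2, h3, h4, h5, h6⟩ :=
          (key_incompat_iff eH fV hvert hop hside hltIn hltOut p q).1 h
        exact ⟨e₁, e₂, f₁, f₂, s, h1, h2, h3, h4, Or.inl ⟨h5, h6⟩⟩
      · obtain ⟨e₁, e₂, f₁, f₂, s, h1, h2, h3, h4, h5, h6⟩ :=
          (key_incompat_iff eH fV hvert hop hside hltIn hltOut q p).1 h
        exact ⟨e₁, e₂, f₁, f₂, s, h1, h2, h3, h4, Or.inr ⟨h5, h6⟩⟩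
  have main : ∀ p q : List G.E, G.CompatD DF p q ↔
      T.Compatible R (p.map (fun a => eH.symm (a, false)), false)
        (q.map (fun a => eH.symm (a, false)), false) := by
    intro p q
    unfold DiGraph.CompatD TurbChart.Compatible
    rw [key p q]
  exact ⟨fun p q _ _ => main p q,
    fun S hS => ⟨fun h p hp q hq => (main p q).1 (h p hp q hq),
      fun h p hp q hq => (main p q).2 (h p hp q hq)⟩⟩
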